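/- In the evaluation tree ET_M(t), for every node (s,p): W(s,p) = {p.L(s)} ∪ ⋃_{n ∈ suc(s,p)} W(n), where suc(s,p) is the set of successor nodes. -/

import Mathlib

/-- A position is a finite list of positive natural numbers. -/
abbrev Pos : Type := List ℕ+

/-- `below p q` (written `p ≤ q` in the paper) holds iff `q` is a prefix of `p`. -/
def below (p q : Pos) : Prop := ∃ q'' : Pos, p = q ++ q''

/-- Terms over a signature `F`, with a single variable `ω` (patterns are linear). -/
inductive Tm (F : Type) : Type
  | var : Tm F
  | app : F → List (Tm F) → Tm F

variable {F : Type}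

/-- Head symbol of a term (none for the variable). -/
def hd : Tm F → Option F
  | .var => none
  | .app f _ => some f

/-- The subterm of `t` at position `p`, if `p` is in the domain of `t`. -/
def subtermAt : Tm F → Pos → Option (Tm F)
  | t, [] => some t
  | .var, _ :: _ => none
  | .app _ ts, i :: p => (ts[(i : ℕ) - 1]?).bind (fun u => subtermAt u p)

/-- The domain (set of positions) of a term. -/
def Dom (t : Tm F) : Set Pos := {p | (subtermAt t p).isSome}

/-- `t` is a closed term: it contains no variable. -/
def Closed (t : Tm F) : Prop := ∀ p u, subtermAt t p = some u → u ≠ Tm.var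

/-- Terms that respect the arity function of the signature. -/
inductive WF (ar : F → ℕ) : Tm F → Prop
  | var : WF ar Tm.var
  | app : ∀ f ts, ts.length = ar f → (∀ u ∈ ts, WF ar u) → WF ar (Tm.app f ts)

/-- Pattern `ℓ` matches term `t` at position `p`: for every non-variable
position `p'` of `ℓ`, the head symbols of `t[p.p']` and `ℓ[p']` agree. -/
def Matches (ℓ t : Tm F) (p : Pos) : Prop :=
  ∀ p' u, subtermAt ℓ p' = some u → u ≠ Tm.var →
    ∃ v, subtermAt t (p ++ p') = some v ∧ hd v = hd u

/-- A match obligation: a set of (subpattern, position) pairs. -/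
abbrev Obl (F : Type) := Set (Tm F × Pos)
/-- A match goal: a match obligation together with a match announcement. -/
abbrev Goal (F : Type) := Obl F × (Tm F × Pos)
/-- A state of the set automaton: a set of match goals. -/
abbrev St (F : Type) := Set (Goal F)

/-- The positions of a match obligation. -/
def posOf (mo : Obl F) : Set Pos := {p | ∃ u, (u, p) ∈ mo}

/-- All match obligation positions of a state. -/
def posMO (s : St F) : Set Pos := {p | ∃ g ∈ s, p ∈ posOf g.1}

/-- Reduction of a match obligation after observing a symbol of arity `n`
at position `p`: pairs at other positions are kept, and the pair at `p` is
replaced by obligations for its non-variable arguments. -/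
def reduce (mo : Obl F) (n : ℕ) (p : Pos) : Obl F :=
  {x | x ∈ mo ∧ x.2 ≠ p} ∪
  {x | ∃ (ℓ u : Tm F) (i : ℕ+), (ℓ, p) ∈ mo ∧ (i : ℕ) ≤ n ∧
        subtermAt ℓ [i] = some u ∧ u ≠ Tm.var ∧ x = (u, p ++ [i])}

/-- The `f`-derivative of state `s` labelled with position `lab`:
unchanged goals, reduced goals and fresh goals. -/
def derivS (pats : Set (Tm F)) (ar : F → ℕ) (s : St F) (lab : Pos) (f : F) : St F :=
  {g | g ∈ s ∧ lab ∉ posOf g.1} ∪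
  {g | ∃ mo ma, (mo, ma) ∈ s ∧ (∃ ℓ, (ℓ, lab) ∈ mo ∧ hd ℓ = some f) ∧
        reduce mo (ar f) lab ≠ ∅ ∧ g = (reduce mo (ar f) lab, ma)} ∪
  {g | ∃ (ℓ : Tm F) (i : ℕ+), ℓ ∈ pats ∧ (i : ℕ) ≤ ar f ∧
        g = ({(ℓ, lab ++ [i])}, (ℓ, lab ++ [i]))}

/-- The direct dependency relation: the obligation position sets intersect. -/
def dirDep (g₁ g₂ : Goal F) : Prop := (posOf g₁.1 ∩ posOf g₂.1).Nonempty

/-- `K` is an equivalence class of `X` under the transitive closure of the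
direct dependency relation restricted to `X`. -/
def IsClass (X K : St F) : Prop :=
  ∃ g ∈ X, K = {g' | g' ∈ X ∧
    Relation.ReflTransGen (fun a b => a ∈ X ∧ b ∈ X ∧ dirDep a b) g g'}

/-- The match announcement positions of a set of goals. -/
def posMA (K : St F) : Set Pos := {p | ∃ mo ℓ, (mo, (ℓ, p)) ∈ K}

/-- `g` is the greatest common prefix (join) of the set of positions `P`. -/
def IsGcp (P : Set Pos) (g : Pos) : Prop :=
  (∀ p ∈ P, below p g) ∧ ∀ r : Pos, (∀ p ∈ P, below p r) → below g r

/-- Lift a match goal by stripping the common prefix `g` from all positions. -/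
def liftGoal (g : Pos) (x : Goal F) : Goal F :=
  ((fun y : Tm F × Pos => (y.1, y.2.drop g.length)) '' x.1,
   (x.2.1, x.2.2.drop g.length))

/-- Lift a set of match goals. -/
def liftSt (g : Pos) (K : St F) : St F := liftGoal g '' K

/-- The transition function of the set automaton: `(s', p') ∈ delta pats ar L s f`
iff `s'` is the lifting of a dependency class `K` of the derivative and `p'` is
the greatest common prefix of the announcement positions of `K`. -/
def delta (pats : Set (Tm F)) (ar : F → ℕ) (L : St F → Pos) (s : St F) (f : F) :
    Set (St F × Pos) :=
  {x | ∃ K, IsClass (derivS pats ar s (L s) f) K ∧ IsGcp (posMA K) x.2 ∧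
        x.1 = liftSt x.2 K}

/-- The initial state: all fresh root goals. -/
def initSt (pats : Set (Tm F)) : St F :=
  {g | ∃ ℓ ∈ pats, g = ({(ℓ, ([] : Pos))}, (ℓ, ([] : Pos)))}

/-- Reachable states of the set automaton. -/
inductive Reachable (pats : Set (Tm F)) (ar : F → ℕ) (L : St F → Pos) : St F → Prop
  | init : Reachable pats ar L (initSt pats)
  | step : ∀ s f s' p, Reachable pats ar L s →
      (s', p) ∈ delta pats ar L s f → Reachable pats ar L s'

/-- The labelling function `L` picks, for every reachable state, an obligation
position of one of its root goals. -/
def RootLabel (pats : Set (Tm F)) (ar : F → ℕ) (L : St F → Pos) : Prop :=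
  ∀ s, Reachable pats ar L s →
    ∃ mo ℓ, (mo, (ℓ, ([] : Pos))) ∈ s ∧ L s ∈ posOf mo

/-- The nodes of the evaluation tree `ET_M(t)`. -/
inductive Node (pats : Set (Tm F)) (ar : F → ℕ) (L : St F → Pos) (t : Tm F) :
    St F → Pos → Prop
  | root : Node pats ar L t (initSt pats) []
  | step : ∀ s p f s' p', Node pats ar L t s p →
      (∃ v, subtermAt t (p ++ L s) = some v ∧ hd v = some f) →
      (s', p') ∈ delta pats ar L s f →
      Node pats ar L t s' (p ++ p')

/-- The edges of the evaluation tree `ET_M(t)`. -/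
def EdgeRel (pats : Set (Tm F)) (ar : F → ℕ) (L : St F → Pos) (t : Tm F)
    (s : St F) (p : Pos) (s' : St F) (q : Pos) : Prop :=
  Node pats ar L t s p ∧ ∃ f p',
    (∃ v, subtermAt t (p ++ L s) = some v ∧ hd v = some f) ∧
    (s', p') ∈ delta pats ar L s f ∧ q = p ++ p'

/-- The work set `W(s,p)`: the positions of `t` below the position pointer that
still have to be inspected. -/
def Work (t : Tm F) (s : St F) (p : Pos) : Set Pos :=
  {x | ∃ q, x = p ++ q ∧ x ∈ Dom t ∧ ∃ r ∈ posMO s, below q r}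

/-- The output function: match announcements whose obligation is completed by
observing `f` at the label position. -/
def outS (ar : F → ℕ) (L : St F → Pos) (s : St F) (f : F) : Set (Tm F × Pos) :=
  {ma | ({(Tm.app f (List.replicate (ar f) Tm.var), L s)}, ma) ∈ s}

section Aux
variable {F : Type}

lemma below_iff {p q : Pos} : below p q ↔ q <+: p := by
  constructor
  · rintro ⟨q'', rfl⟩; exact ⟨q'', rfl⟩
  · rintro ⟨q'', rfl⟩; exact ⟨q'', rfl⟩

lemma below_refl (p : Pos) : below p p := ⟨[], by simp⟩

lemma drop_prefix_of_prefix {g a b : Pos} (h1 : g <+: a) (h2 : a <+: b) :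
    a.drop g.length <+: b.drop g.length := by
  obtain ⟨a', rfl⟩ := h1
  obtain ⟨c, rfl⟩ := h2
  rw [List.drop_left, List.append_assoc, List.drop_left]
  exact ⟨c, rfl⟩

lemma append_drop_of_prefix {g a : Pos} (h : g <+: a) :
    g ++ a.drop g.length = a := by
  obtain ⟨a', rfl⟩ := h
  rw [List.drop_left]

lemma exists_isGcp {P : Set Pos} (hP : P.Nonempty) : ∃ g, IsGcp P g := by
  obtain ⟨p₀, hp₀⟩ := hP
  set S : Set ℕ := {n | ∃ g : Pos, g.length = n ∧ ∀ p ∈ P, g <+: p} with hS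
  have h0 : 0 ∈ S := ⟨[], rfl, fun p _ => List.nil_prefix⟩
  have hbdd : BddAbove S := ⟨p₀.length, by rintro n ⟨g, rfl, hg⟩; exact (hg p₀ hp₀).length_le⟩
  obtain ⟨g, hglen, hg⟩ := Nat.sSup_mem ⟨0, h0⟩ hbdd
  refine ⟨g, fun p hp => below_iff.mpr (hg p hp), ?_⟩
  intro r hr
  rw [below_iff]
  have hr' : ∀ p ∈ P, r <+: p := fun p hp => below_iff.mp (hr p hp)
  have hlen : r.length ≤ g.length := by
    rw [hglen]; exact le_csSup hbdd ⟨r, rfl, hr'⟩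
  rcases List.prefix_or_prefix_of_prefix (hr' p₀ hp₀) (hg p₀ hp₀) with h | h
  · exact h
  · rw [h.eq_of_length_le hlen]

lemma subtermAt_append (t : Tm F) (p q : Pos) :
    subtermAt t (p ++ q) = (subtermAt t p).bind (fun u => subtermAt u q) := by
  induction p generalizing t with
  | nil => simp [subtermAt]
  | cons i p ih =>
    cases t with
    | var => simp [subtermAt]
    | app f ts =>
      simp only [List.cons_append, subtermAt]
      cases ts[(i : ℕ) - 1]? with
      | none => simp
      | some u => simp [ih]

lemma closed_subterm_app {t : Tm F} (hc : Closed t) {p : Pos} {v : Tm F}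
    (h : subtermAt t p = some v) : ∃ f ts, v = Tm.app f ts := by
  cases v with
  | var => exact absurd rfl (hc p _ h)
  | app f ts => exact ⟨f, ts, rfl⟩

lemma wf_subterm {ar : F → ℕ} : ∀ {p : Pos} {t v : Tm F}, WF ar t →
    subtermAt t p = some v → WF ar v := by
  intro p
  induction p with
  | nil => intro t v hw h; simp [subtermAt] at h; exact h ▸ hw
  | cons i p ih =>
    intro t v hw h
    cases t with
    | var => simp [subtermAt] at h
    | app f ts =>
      simp only [subtermAt, Option.bind_eq_some_iff] at h
      obtain ⟨u, hu, hsub⟩ := h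
      cases hw with
      | app _ _ hlen hall => exact ih (hall u (List.mem_of_getElem? hu)) hsub

end Aux
section Aux2
variable {F : Type}

lemma posOf_singleton (ℓ : Tm F) (r : Pos) : posOf ({(ℓ, r)} : Obl F) = {r} := by
  ext q; simp [posOf]

lemma mem_posMO_of {s : St F} {mo : Obl F} {ma : Tm F × Pos} {u : Tm F} {r : Pos}
    (hg : (mo, ma) ∈ s) (hu : (u, r) ∈ mo) : r ∈ posMO s :=
  ⟨(mo, ma), hg, u, hu⟩

lemma posMO_mono {s s' : St F} (h : s ⊆ s') : posMO s ⊆ posMO s' := by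
  rintro r ⟨g, hg, hr⟩; exact ⟨g, h hg, hr⟩

/-- Invariant: the announcement position of a goal is a prefix of all its
obligation positions. -/
def InvMa (s : St F) : Prop :=
  ∀ mo ℓ pa, (mo, (ℓ, pa)) ∈ s → ∀ u q, (u, q) ∈ mo → pa <+: q

lemma invMa_init (pats : Set (Tm F)) : InvMa (initSt pats) := by
  rintro mo ℓ pa ⟨ℓ', hℓ', heq⟩ u q hq
  obtain ⟨h1, h2⟩ := Prod.mk.injEq .. ▸ heq
  subst h1
  obtain ⟨h3, h4⟩ := Prod.mk.injEq .. ▸ h2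
  subst h4
  exact List.nil_prefix

lemma invMa_deriv {pats : Set (Tm F)} {ar : F → ℕ} {s : St F} {lab : Pos} {f : F}
    (h : InvMa s) : InvMa (derivS pats ar s lab f) := by
  rintro mo ℓ pa hg u q hq
  rcases hg with (⟨hg, -⟩ | ⟨mo0, ma0, hms, ⟨ℓ0, hℓ0, -⟩, -, heq⟩) | ⟨ℓ0, i, -, -, heq⟩
  · exact h mo ℓ pa hg u q hq
  · obtain ⟨h1, h2⟩ := Prod.mk.injEq .. ▸ heq
    subst h1 h2
    rcases hq with ⟨hq1, -⟩ | ⟨ℓ', u', i, hmem, -, -, -, heq'⟩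
    · exact h mo0 ℓ pa hms u q hq1
    · obtain ⟨h3, h4⟩ := Prod.mk.injEq .. ▸ heq'
      subst h4
      exact (h mo0 ℓ pa hms ℓ' lab hmem).trans ⟨[i], rfl⟩
  · obtain ⟨h1, h2⟩ := Prod.mk.injEq .. ▸ heq
    subst h1
    obtain ⟨h3, h4⟩ := Prod.mk.injEq .. ▸ h2
    subst h4
    rcases hq with hq
    simp only [Set.mem_singleton_iff, Prod.mk.injEq] at hq
    exact hq.2 ▸ List.prefix_refl _

lemma isClass_subset {X K : St F} (h : IsClass X K) : K ⊆ X := by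
  obtain ⟨g, hg, rfl⟩ := h
  exact fun g' hg' => hg'.1

lemma mem_posMA_of {K : St F} {mo : Obl F} {ℓ : Tm F} {pa : Pos}
    (h : (mo, (ℓ, pa)) ∈ K) : pa ∈ posMA K := ⟨mo, ℓ, h⟩

lemma invMa_lift {X K : St F} {g : Pos} (hX : InvMa X) (hK : K ⊆ X)
    (hg : ∀ pa ∈ posMA K, g <+: pa) : InvMa (liftSt g K) := by
  rintro mo ℓ pa ⟨⟨mo0, ℓ0, pa0⟩, hK0, heq⟩ u q hq
  simp only [liftGoal, Prod.mk.injEq] at heq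
  obtain ⟨h1, h2, h3⟩ := heq
  subst h1 h3
  obtain ⟨⟨u0, q0⟩, hq0, heq'⟩ := hq
  simp only [Prod.mk.injEq] at heq'
  obtain ⟨h4, h5⟩ := heq'
  subst h5
  have hpre : pa0 <+: q0 := hX mo0 ℓ0 pa0 (hK hK0) u0 q0 hq0
  have hgpre : g <+: pa0 := hg pa0 (mem_posMA_of hK0)
  exact drop_prefix_of_prefix hgpre hpre

lemma invMa_reach {pats : Set (Tm F)} {ar : F → ℕ} {L : St F → Pos} {s : St F}
    (h : Reachable pats ar L s) : InvMa s := by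
  induction h with
  | init => exact invMa_init pats
  | step s f s' p hr hdelta ih =>
    obtain ⟨K, hKc, hgcp, heq⟩ := hdelta
    simp only at heq hgcp
    rw [heq]
    exact invMa_lift (invMa_deriv ih) (isClass_subset hKc)
      (fun pa hpa => below_iff.mp (hgcp.1 pa hpa))

lemma node_reachable {pats : Set (Tm F)} {ar : F → ℕ} {L : St F → Pos} {t : Tm F}
    {s : St F} {p : Pos} (h : Node pats ar L t s p) : Reachable pats ar L s := by
  induction h with
  | root => exact Reachable.init
  | step s p f s' p' hn hv hdelta ih => exact Reachable.step s f s' p' ih hdelta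

end Aux2
section Aux3
variable {F : Type}

lemma posMO_derivS {pats : Set (Tm F)} {ar : F → ℕ} {s : St F} {lab : Pos} {f : F} {r : Pos}
    (h : r ∈ posMO (derivS pats ar s lab f)) :
    (r ∈ posMO s ∧ r ≠ lab) ∨ ∃ i : ℕ+, (i : ℕ) ≤ ar f ∧ r = lab ++ [i] := by
  obtain ⟨⟨mo, ma⟩, hg, u, hu⟩ := h
  rcases hg with (⟨hg, hlab⟩ | ⟨mo0, ma0, hms, -, -, heq⟩) | ⟨ℓ0, i, -, hi, heq⟩
  · left
    refine ⟨mem_posMO_of hg hu, ?_⟩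
    rintro rfl
    exact hlab ⟨u, hu⟩
  · obtain ⟨h1, h2⟩ := Prod.mk.injEq .. ▸ heq
    subst h1
    rcases hu with ⟨hq1, hq2⟩ | ⟨ℓ', u', i, hmem, hi, -, -, heq'⟩
    · exact Or.inl ⟨mem_posMO_of hms hq1, hq2⟩
    · obtain ⟨h3, h4⟩ := Prod.mk.injEq .. ▸ heq'
      exact Or.inr ⟨i, hi, h4⟩
  · obtain ⟨h1, h2⟩ := Prod.mk.injEq .. ▸ heq
    subst h1
    simp only [Set.mem_singleton_iff, Prod.mk.injEq] at hu
    exact Or.inr ⟨i, hi, hu.2⟩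

def classOf (X : St F) (g : Goal F) : St F :=
  {g' | g' ∈ X ∧ Relation.ReflTransGen (fun a b => a ∈ X ∧ b ∈ X ∧ dirDep a b) g g'}

lemma isClass_classOf {X : St F} {g : Goal F} (hg : g ∈ X) : IsClass X (classOf X g) :=
  ⟨g, hg, rfl⟩

lemma self_mem_classOf {X : St F} {g : Goal F} (hg : g ∈ X) : g ∈ classOf X g :=
  ⟨hg, Relation.ReflTransGen.refl⟩

lemma mem_class_of_dirDep {X K : St F} (hK : IsClass X K) {h h' : Goal F}
    (hh : h ∈ K) (hh' : h' ∈ X) (hd : dirDep h h') : h' ∈ K := by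
  obtain ⟨g0, hg0, rfl⟩ := hK
  exact ⟨hh', hh.2.tail ⟨hh.1, hh', hd⟩⟩

lemma mem_posMO_liftSt {K : St F} {g : Pos} {r' : Pos} :
    r' ∈ posMO (liftSt g K) ↔ ∃ r₀ ∈ posMO K, r' = r₀.drop g.length := by
  constructor
  · rintro ⟨gl, ⟨⟨mo0, ma0⟩, hK0, heq⟩, u, hu⟩
    subst heq
    obtain ⟨⟨u0, q0⟩, hq0, heq'⟩ := hu
    simp only [Prod.mk.injEq] at heq'
    exact ⟨q0, mem_posMO_of hK0 hq0, heq'.2.symm⟩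
  · rintro ⟨r₀, ⟨⟨mo0, ma0⟩, hK0, u, hu⟩, rfl⟩
    refine ⟨liftGoal g (mo0, ma0), ⟨(mo0, ma0), hK0, rfl⟩, u, ?_⟩
    exact ⟨(u, r₀), hu, rfl⟩

lemma gcp_prefix_posMO {X K : St F} {g : Pos} (hX : InvMa X) (hK : IsClass X K)
    (hg : IsGcp (posMA K) g) : ∀ r ∈ posMO K, g <+: r := by
  rintro r ⟨⟨mo, ℓ, pa⟩, hmem, u, hu⟩
  have h1 : g <+: pa := below_iff.mp (hg.1 pa (mem_posMA_of hmem))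
  have h2 : pa <+: r := hX mo ℓ pa (isClass_subset hK hmem) u r hu
  exact h1.trans h2

/-- Invariant: every obligation position carries a fresh singleton goal. -/
def Inv2 (s : St F) : Prop :=
  ∀ r ∈ posMO s, ∃ ℓ : Tm F, (({(ℓ, r)} : Obl F), (ℓ, r)) ∈ s

lemma inv2_reach {pats : Set (Tm F)} {ar : F → ℕ} {L : St F → Pos} {s : St F}
    (hpats : pats.Nonempty) (h : Reachable pats ar L s) : Inv2 s := by
  induction h with
  | init =>
    rintro r ⟨g, ⟨ℓ, hℓ, rfl⟩, u, hu⟩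
    simp only [Set.mem_singleton_iff, Prod.mk.injEq] at hu
    exact ⟨ℓ, ⟨ℓ, hℓ, by rw [hu.2]⟩⟩
  | step s f s' p hr hdelta ih =>
    obtain ⟨K, hKc, hgcp, heq⟩ := hdelta
    simp only at heq hgcp
    subst heq
    intro r' hr'
    obtain ⟨r₀, hr₀, rfl⟩ := mem_posMO_liftSt.mp hr'
    -- find goal h ∈ K with r₀ among its positions
    obtain ⟨hgoal, hgK, u, hu⟩ := hr₀
    have hr₀X : r₀ ∈ posMO (derivS pats ar s (L s) f) :=
      posMO_mono (isClass_subset hKc) ⟨hgoal, hgK, u, hu⟩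
    have hσ : ∃ ℓ : Tm F, (({(ℓ, r₀)} : Obl F), (ℓ, r₀)) ∈ derivS pats ar s (L s) f := by
      rcases posMO_derivS hr₀X with ⟨hmem, hne⟩ | ⟨i, hi, rfl⟩
      · obtain ⟨ℓ, hℓ⟩ := ih r₀ hmem
        refine ⟨ℓ, Or.inl (Or.inl ⟨hℓ, ?_⟩)⟩
        rw [posOf_singleton]
        exact fun hc => hne (Set.mem_singleton_iff.mp hc).symm
      · obtain ⟨ℓ, hℓ⟩ := hpats
        exact ⟨ℓ, Or.inr ⟨ℓ, i, hℓ, hi, rfl⟩⟩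
    obtain ⟨ℓ, hσ⟩ := hσ
    have hσK : (({(ℓ, r₀)} : Obl F), (ℓ, r₀)) ∈ K := by
      refine mem_class_of_dirDep hKc hgK hσ ⟨r₀, ⟨u, hu⟩, ?_⟩
      rw [posOf_singleton]; rfl
    refine ⟨ℓ, ⟨(({(ℓ, r₀)} : Obl F), (ℓ, r₀)), hσK, ?_⟩⟩
    simp [liftGoal]

end Aux3
section Aux4
variable {F : Type}

lemma subtermAt_arg {f : F} {ts : List (Tm F)} {i : ℕ+} (hi : (i : ℕ) ≤ ts.length) :
    (subtermAt (Tm.app f ts) [i]).isSome := by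
  have h1 : (i : ℕ) - 1 < ts.length := by have : 0 < (i : ℕ) := i.pos; omega
  simp [subtermAt, List.getElem?_eq_getElem h1]

lemma subtermAt_arg_bound {f : F} {ts : List (Tm F)} {i : ℕ+} {q : Pos}
    (h : (subtermAt (Tm.app f ts) (i :: q)).isSome) : (i : ℕ) ≤ ts.length := by
  simp only [subtermAt] at h
  cases hg : ts[(i : ℕ) - 1]? with
  | none => rw [hg] at h; simp at h
  | some u =>
    have := List.getElem?_eq_some_iff.mp hg
    have h2 := this.1
    have : 0 < (i : ℕ) := i.pos
    omega

lemma invDom {pats : Set (Tm F)} {ar : F → ℕ} {L : St F → Pos} {t : Tm F}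
    (hc : Closed t) (hw : WF ar t) :
    ∀ {s : St F} {p : Pos}, Node pats ar L t s p → ∀ r ∈ posMO s, (p ++ r) ∈ Dom t := by
  intro s p h
  induction h with
  | root =>
    rintro r ⟨g, ⟨ℓ, hℓ, rfl⟩, u, hu⟩
    simp only [Set.mem_singleton_iff, Prod.mk.injEq] at hu
    obtain ⟨-, rfl⟩ := hu
    simp [Dom, subtermAt]
  | step s p f s' p' hn hv hdelta ih =>
    intro r' hr'
    obtain ⟨K, hKc, hgcp, heq⟩ := hdelta
    simp only at heq hgcp
    subst heq
    obtain ⟨r₀, hr₀K, rfl⟩ := mem_posMO_liftSt.mp hr'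
    have hInvX : InvMa (derivS pats ar s (L s) f) :=
      invMa_deriv (invMa_reach (node_reachable hn))
    have hgp : p' <+: r₀ := gcp_prefix_posMO hInvX hKc hgcp r₀ hr₀K
    have hre : (p ++ p') ++ r₀.drop p'.length = p ++ r₀ := by
      rw [List.append_assoc, append_drop_of_prefix hgp]
    rw [hre]
    rcases posMO_derivS (posMO_mono (isClass_subset hKc) hr₀K) with ⟨hmem, -⟩ | ⟨i, hi, rfl⟩
    · exact ih r₀ hmem
    · obtain ⟨v, hv1, hv2⟩ := hv
      obtain ⟨f', ts, rfl⟩ := closed_subterm_app hc hv1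
      simp only [hd, Option.some.injEq] at hv2
      subst hv2
      have hwfv := wf_subterm hw hv1
      have hlen : (i : ℕ) ≤ ts.length := by
        cases hwfv with | app _ _ h2 _ => omega
      have : p ++ (L s ++ [i]) = (p ++ L s) ++ [i] := by rw [List.append_assoc]
      rw [Dom, Set.mem_setOf_eq, this, subtermAt_append, hv1, Option.bind_some]
      exact subtermAt_arg hlen

end Aux4
section Aux5
variable {F : Type}

/-- If the derivative contains a fresh-style singleton goal at position `w`,
then any domain position `p ++ q` with `w ≤ q` is covered by a successor. -/
lemma work_succ_cover {pats : Set (Tm F)} {ar : F → ℕ} {L : St F → Pos} {t : Tm F}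
    {s : St F} {p : Pos} (hnode : Node pats ar L t s p)
    {f : F} (hf : ∃ v, subtermAt t (p ++ L s) = some v ∧ hd v = some f)
    {ℓ₁ : Tm F} {w : Pos}
    (hσ : (({(ℓ₁, w)} : Obl F), (ℓ₁, w)) ∈ derivS pats ar s (L s) f)
    {q : Pos} (hwq : w <+: q) (hdom : (p ++ q) ∈ Dom t) :
    ∃ (s' : St F) (q' : Pos), EdgeRel pats ar L t s p s' q' ∧ (p ++ q) ∈ Work t s' q' := by
  set X := derivS pats ar s (L s) f with hX
  set σ : Goal F := (({(ℓ₁, w)} : Obl F), (ℓ₁, w)) with hσdef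
  set K := classOf X σ with hK
  have hσK : σ ∈ K := self_mem_classOf hσ
  have hwMA : w ∈ posMA K := mem_posMA_of hσK
  obtain ⟨g, hgcp⟩ := exists_isGcp ⟨w, hwMA⟩
  have hgw : g <+: w := below_iff.mp (hgcp.1 w hwMA)
  have hgq : g <+: q := hgw.trans hwq
  refine ⟨liftSt g K, p ++ g, ⟨hnode, f, g, hf, ⟨K, isClass_classOf hσ, hgcp, rfl⟩, rfl⟩, ?_⟩
  refine ⟨q.drop g.length, ?_, ?_, w.drop g.length, ?_, ?_⟩
  · rw [List.append_assoc, append_drop_of_prefix hgq]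
  · exact hdom
  · exact mem_posMO_liftSt.mpr ⟨w, ⟨σ, hσK, ℓ₁, rfl⟩, rfl⟩
  · exact below_iff.mpr (drop_prefix_of_prefix hgw hwq)

end Aux5
/-- In the evaluation tree of a closed term `t`, the work set of a node is the
inspected position together with the union of the work sets of its successors. -/
theorem work_decomposition {F : Type} (pats : Set (Tm F))
    (ar : F → ℕ) (L : St F → Pos) (t : Tm F) (hc : Closed t) (hw : WF ar t)
    (hpats : pats.Nonempty) (hWF : ∀ ℓ ∈ pats, WF ar ℓ)
    (hpv : ∀ ℓ ∈ pats, ℓ ≠ Tm.var) (hL : RootLabel pats ar L) :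
    ∀ (s : St F) (p : Pos), Node pats ar L t s p →
      Work t s p = {p ++ L s} ∪
        {x | ∃ (s' : St F) (q : Pos), EdgeRel pats ar L t s p s' q ∧
          x ∈ Work t s' q} := by
  intro s p hnode
  have hreach := node_reachable hnode
  have hInv2 := inv2_reach hpats hreach
  obtain ⟨mo₀, ℓ₀, hmo₀, hL₀⟩ := hL s hreach
  have hLpos : L s ∈ posMO s := by
    obtain ⟨u, hu⟩ := hL₀
    exact mem_posMO_of hmo₀ hu
  have hdomL : (p ++ L s) ∈ Dom t := invDom hc hw hnode (L s) hLpos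
  obtain ⟨v, hv⟩ := Option.isSome_iff_exists.mp hdomL
  obtain ⟨f, ts, rfl⟩ := closed_subterm_app hc hv
  have hfhd : ∃ v', subtermAt t (p ++ L s) = some v' ∧ hd v' = some f := ⟨_, hv, rfl⟩
  ext x
  simp only [Work, Set.mem_union, Set.mem_singleton_iff, Set.mem_setOf_eq]
  constructor
  · rintro ⟨q, rfl, hxdom, r, hr, hqr⟩
    by_cases hqL : q = L s
    · exact Or.inl (by rw [hqL])
    right
    rw [below_iff] at hqr
    by_cases hLq : L s <+: q
    · -- case B : the inspected position is a proper prefix of `q`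
      obtain ⟨rest, rfl⟩ := hLq
      cases rest with
      | nil => exact absurd (List.append_nil _) hqL
      | cons i tail =>
        have hdom' : (subtermAt (Tm.app f ts) (i :: tail)).isSome := by
          have he : p ++ (L s ++ i :: tail) = (p ++ L s) ++ (i :: tail) := by
            rw [List.append_assoc]
          rw [Dom, Set.mem_setOf_eq, he, subtermAt_append, hv, Option.bind_some] at hxdom
          exact hxdom
        have hilen : (i : ℕ) ≤ ts.length := subtermAt_arg_bound hdom'
        have hwfv := wf_subterm hw hv
        have hiar : (i : ℕ) ≤ ar f := by cases hwfv with | app _ _ h2 _ => omega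
        obtain ⟨ℓ₁, hℓ₁⟩ := hpats
        have hσ : (({(ℓ₁, L s ++ [i])} : Obl F), (ℓ₁, L s ++ [i])) ∈
            derivS pats ar s (L s) f := Or.inr ⟨ℓ₁, i, hℓ₁, hiar, rfl⟩
        have hwq : (L s ++ [i]) <+: (L s ++ i :: tail) := ⟨tail, by simp⟩
        exact work_succ_cover hnode hfhd hσ hwq hxdom
    · -- case C : some untouched obligation position covers `q`
      have hrL : r ≠ L s := fun h => hLq (h ▸ hqr)
      obtain ⟨ℓ₁, hσs⟩ := hInv2 r hr
      have hσ : (({(ℓ₁, r)} : Obl F), (ℓ₁, r)) ∈ derivS pats ar s (L s) f := by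
        refine Or.inl (Or.inl ⟨hσs, ?_⟩)
        rw [posOf_singleton]
        exact fun hc' => hrL ((Set.mem_singleton_iff.mp hc').symm ▸ rfl)
      exact work_succ_cover hnode hfhd hσ hqr hxdom
  · rintro (rfl | ⟨s', q, ⟨hnode2, f', p', hf', hdelta, rfl⟩, hx⟩)
    · exact ⟨L s, rfl, hdomL, L s, hLpos, below_refl _⟩
    · obtain ⟨K, hKc, hgcp, heq⟩ := hdelta
      simp only at heq hgcp
      subst heq
      obtain ⟨q', hxe, hxdom, r', hr', hq'r'⟩ := hx
      obtain ⟨r₀, hr₀K, rfl⟩ := mem_posMO_liftSt.mp hr'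
      have hInvX : InvMa (derivS pats ar s (L s) f') :=
        invMa_deriv (invMa_reach hreach)
      have hgp : p' <+: r₀ := gcp_prefix_posMO hInvX hKc hgcp r₀ hr₀K
      rw [below_iff] at hq'r'
      have hr₀q : r₀ <+: p' ++ q' := by
        obtain ⟨c, hc'⟩ := hq'r'
        exact ⟨c, by rw [← hc', ← List.append_assoc, append_drop_of_prefix hgp]⟩
      refine ⟨p' ++ q', by rw [hxe, List.append_assoc], hxdom, ?_⟩
      rcases posMO_derivS (posMO_mono (isClass_subset hKc) hr₀K) with ⟨hmem, -⟩ | ⟨i, hi, rfl⟩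
      · exact ⟨r₀, hmem, below_iff.mpr hr₀q⟩
      · exact ⟨L s, hLpos,
          below_iff.mpr (List.IsPrefix.trans ⟨[i], rfl⟩ hr₀q)⟩
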